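/- Let G be a (2P2 ∪ P1)-free graph and let S be a cutset of G. If some connected component of G − S contains at least two vertices, then every other connected component of G − S (viewed as an induced subgraph of G) is (P2 ∪ P1)-free. -/
import Mathlib


open SimpleGraph

variable {V : Type*}

/-- The number of connected components of `G - S`. -/
noncomputable def SimpleGraph.compCount (G : SimpleGraph V) (S : Set V) : ℕ :=
  Nat.card (G.induce Sᶜ).ConnectedComponent

/-- `S` is a cutset of `G`: `G - S` has at least two connected components. -/
def SimpleGraph.IsCutset (G : SimpleGraph V) (S : Set V) : Prop :=
  2 ≤ G.compCount S

/-- `G` is `t`-tough. -/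
def SimpleGraph.Tough (t : ℝ) (G : SimpleGraph V) : Prop :=
  ∀ S : Set V, G.IsCutset S → t * G.compCount S ≤ S.ncard

/-- `G` contains no induced subgraph isomorphic to `H`. -/
def SimpleGraph.IndFree {W : Type*} (G : SimpleGraph V) (H : SimpleGraph W) : Prop :=
  ¬ ∃ f : W ↪ V, ∀ a b : W, G.Adj (f a) (f b) ↔ H.Adj a b

/-- The 5-vertex graph `2P2 ∪ P1`: two disjoint edges and an isolated vertex. -/
def twoP2P1 : SimpleGraph (Fin 5) :=
  SimpleGraph.fromRel (fun i j => (i = 0 ∧ j = 1) ∨ (i = 2 ∧ j = 3))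

/-- The 3-vertex graph `P2 ∪ P1`: an edge and an isolated vertex. -/
def P2P1 : SimpleGraph (Fin 3) :=
  SimpleGraph.fromRel (fun i j => i = 0 ∧ j = 1)

/-- The path on four vertices `P4`. -/
def P4 : SimpleGraph (Fin 4) :=
  SimpleGraph.fromRel (fun i j => (i = 0 ∧ j = 1) ∨ (i = 1 ∧ j = 2) ∨ (i = 2 ∧ j = 3))

/-- Degree of a vertex, as the cardinality of its neighbor set. -/
noncomputable def SimpleGraph.deg (G : SimpleGraph V) (v : V) : ℕ :=
  (G.neighborSet v).ncard

/-- Minimum degree. -/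
noncomputable def SimpleGraph.minDeg (G : SimpleGraph V) : ℕ :=
  sInf (Set.range G.deg)

/-- An independent set of vertices. -/
def SimpleGraph.IsIndepSet' (G : SimpleGraph V) (s : Set V) : Prop :=
  s.Pairwise (fun u v => ¬ G.Adj u v)

/-- The independence number. -/
noncomputable def SimpleGraph.indepNum' (G : SimpleGraph V) : ℕ :=
  sSup {n : ℕ | ∃ s : Set V, G.IsIndepSet' s ∧ s.ncard = n}

/-- `G` is a complete graph. -/
def SimpleGraph.IsCompleteGraph (G : SimpleGraph V) : Prop :=
  ∀ u v : V, u ≠ v → G.Adj u v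

open scoped Classical in
/-- Vertex connectivity: minimum size of a cutset for a noncomplete graph,
and `|V| - 1` for a complete graph. -/
noncomputable def SimpleGraph.kappa (G : SimpleGraph V) : ℕ :=
  if G.IsCompleteGraph then Nat.card V - 1
  else sInf {n : ℕ | ∃ S : Set V, G.IsCutset S ∧ S.ncard = n}

open scoped Classical in
/-- The scattering number: `max {c(G-S) - |S| : S a cutset}` for a noncomplete graph,
and `⊤` for a complete graph. -/
noncomputable def SimpleGraph.scatter (G : SimpleGraph V) : WithTop ℤ :=
  if G.IsCompleteGraph then ⊤
  else ((sSup {z : ℤ | ∃ S : Set V, G.IsCutset S ∧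
      z = (G.compCount S : ℤ) - (S.ncard : ℤ)} : ℤ) : WithTop ℤ)

/-- A `W`-matched path-cover of the vertex set `A`: a union of vertex-disjoint paths of `G`
covering `A`, each of whose two endvertices belong to `W`. -/
structure SimpleGraph.PathCover (G : SimpleGraph V) (A : Set V) (W : Set V) where
  num : ℕ
  left : Fin num → V
  right : Fin num → V
  walk : ∀ i, G.Walk (left i) (right i)
  isPath : ∀ i, (walk i).IsPath
  disj : ∀ i j, i ≠ j → ∀ v, v ∈ (walk i).support → v ∉ (walk j).support
  cover : A ⊆ {v | ∃ i, v ∈ (walk i).support}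
  matched : ∀ i, left i ∈ W ∧ right i ∈ W

/-- If `G` is `(2P2 ∪ P1)`-free, `S` is a cutset of `G`, and some component of `G - S` has
at least two vertices, then every other component of `G - S`, viewed as an induced subgraph
of `G`, is `(P2 ∪ P1)`-free. -/
theorem stmt_16 {V : Type*} [Fintype V] (G : SimpleGraph V) (hfree : G.IndFree twoP2P1)
    (S : Set V) (hS : G.IsCutset S)
    (C : (G.induce Sᶜ).ConnectedComponent) (hC : 2 ≤ C.supp.ncard) :
    ∀ D : (G.induce Sᶜ).ConnectedComponent, D ≠ C →
      (G.induce (Subtype.val '' D.supp)).IndFree P2P1 := by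
  rintro D hD ⟨f, hf⟩
  have hmem : ∀ i : Fin 3, ∃ d : ↥Sᶜ, d ∈ D.supp ∧ (d : V) = ((f i : ↥(Subtype.val '' D.supp)) : V) := by
    intro i
    obtain ⟨d, hd, hval⟩ := (f i).property
    exact ⟨d, hd, hval⟩
  obtain ⟨dx, hdx, hdxv⟩ := hmem 0
  obtain ⟨dy, hdy, hdyv⟩ := hmem 1
  obtain ⟨dz, hdz, hdzv⟩ := hmem 2
  obtain ⟨u, v, hu, hv, huv⟩ := (Set.one_lt_ncard_iff (Set.toFinite _)).mp hC
  have hreach : (G.induce Sᶜ).Reachable u v := by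
    rw [ConnectedComponent.mem_supp_iff] at hu hv
    exact (ConnectedComponent.eq).mp (hu.trans hv.symm)
  obtain ⟨p⟩ := hreach
  obtain ⟨w, hw⟩ : ∃ w, (G.induce Sᶜ).Adj u w := by
    cases p with
    | nil => exact absurd rfl huv
    | cons h _ => exact ⟨_, h⟩
  have hwC : w ∈ C.supp := by
    rw [ConnectedComponent.mem_supp_iff] at hu ⊢
    rw [← hu]
    exact ConnectedComponent.eq.mpr hw.symm.reachable
  have cross : ∀ (p : ↥Sᶜ), p ∈ C.supp → ∀ q ∈ D.supp, ¬ G.Adj p q := by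
    intro p hp q hq hadj
    have h2 : (G.induce Sᶜ).Adj p q := hadj
    rw [ConnectedComponent.mem_supp_iff] at hp hq
    exact hD ((hq ▸ hp ▸ ConnectedComponent.eq.mpr h2.reachable : C = D)).symm
  -- vertices
  set a : V := (u : V) with ha
  set b : V := (w : V) with hb
  set x : V := ((f 0 : ↥(Subtype.val '' D.supp)) : V) with hx
  set y : V := ((f 1 : ↥(Subtype.val '' D.supp)) : V) with hy
  set z : V := ((f 2 : ↥(Subtype.val '' D.supp)) : V) with hz
  have hab : G.Adj a b := hw
  have hxy : G.Adj x y := by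
    exact (hf 0 1).mpr (by simp [P2P1])
  have hxz : ¬ G.Adj x z := fun h => by
    have := (hf 0 2).mp h
    simp [P2P1] at this
  have hyz : ¬ G.Adj y z := fun h => by
    have := (hf 1 2).mp h
    simp [P2P1] at this
  have hax : ¬ G.Adj a x := hdxv ▸ cross u hu dx hdx
  have hay : ¬ G.Adj a y := hdyv ▸ cross u hu dy hdy
  have haz : ¬ G.Adj a z := hdzv ▸ cross u hu dz hdz
  have hbx : ¬ G.Adj b x := hdxv ▸ cross w hwC dx hdx
  have hby : ¬ G.Adj b y := hdyv ▸ cross w hwC dy hdy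
  have hbz : ¬ G.Adj b z := hdzv ▸ cross w hwC dz hdz
  -- distinctness
  have neCD : ∀ (p : ↥Sᶜ), p ∈ C.supp → ∀ q ∈ D.supp, (p : V) ≠ (q : V) := by
    intro p hp q hq h
    have : p = q := Subtype.val_injective h
    rw [ConnectedComponent.mem_supp_iff] at hp hq
    exact hD ((hq ▸ hp ▸ (this ▸ rfl : (G.induce Sᶜ).connectedComponentMk p
      = (G.induce Sᶜ).connectedComponentMk q) : C = D)).symm
  have nab : a ≠ b := Subtype.val_injective.ne hw.ne
  have nax : a ≠ x := hdxv ▸ neCD u hu dx hdx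
  have nay : a ≠ y := hdyv ▸ neCD u hu dy hdy
  have naz : a ≠ z := hdzv ▸ neCD u hu dz hdz
  have nbx : b ≠ x := hdxv ▸ neCD w hwC dx hdx
  have nby : b ≠ y := hdyv ▸ neCD w hwC dy hdy
  have nbz : b ≠ z := hdzv ▸ neCD w hwC dz hdz
  have nxy : x ≠ y := hxy.ne
  have nxz : x ≠ z := fun h => (f.injective.ne (show (0:Fin 3) ≠ 2 by decide)) (Subtype.val_injective h)
  have nyz : y ≠ z := fun h => (f.injective.ne (show (1:Fin 3) ≠ 2 by decide)) (Subtype.val_injective h)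
  have hba : G.Adj b a := hab.symm
  have hyx : G.Adj y x := hxy.symm
  have hxa : ¬ G.Adj x a := fun h => hax h.symm
  have hya : ¬ G.Adj y a := fun h => hay h.symm
  have hza : ¬ G.Adj z a := fun h => haz h.symm
  have hxb : ¬ G.Adj x b := fun h => hbx h.symm
  have hyb : ¬ G.Adj y b := fun h => hby h.symm
  have hzb : ¬ G.Adj z b := fun h => hbz h.symm
  have hzx : ¬ G.Adj z x := fun h => hxz h.symm
  have hzy : ¬ G.Adj z y := fun h => hyz h.symm
  have nba : b ≠ a := nab.symm
  have nxa : x ≠ a := nax.symm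
  have nya : y ≠ a := nay.symm
  have nza : z ≠ a := naz.symm
  have nxb : x ≠ b := nbx.symm
  have nyb : y ≠ b := nby.symm
  have nzb : z ≠ b := nbz.symm
  have nyx : y ≠ x := nxy.symm
  have nzx : z ≠ x := nxz.symm
  have nzy : z ≠ y := nyz.symm
  refine hfree ⟨⟨![a, b, x, y, z], ?_⟩, ?_⟩
  · intro i j h
    fin_cases i <;> fin_cases j <;>
      first
        | rfl
        | (exfalso
           simp only [Matrix.cons_val_zero, Matrix.cons_val_one, Matrix.head_cons,
             Matrix.cons_val_two, Matrix.tail_cons, Matrix.cons_val_three,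
             Matrix.cons_val_four, Matrix.cons_val_succ] at h
           tauto)
  · intro i j
    fin_cases i <;> fin_cases j <;>
      simp only [Matrix.cons_val_zero, Matrix.cons_val_one, Matrix.head_cons,
        Matrix.cons_val_two, Matrix.tail_cons, Matrix.cons_val_three,
        Matrix.cons_val_four, Matrix.cons_val_succ, twoP2P1, fromRel_adj] <;>
      constructor <;> intro h <;>
      first
        | decide
        | exact hab | exact hba | exact hxy | exact hyx
        | exact absurd rfl (G.ne_of_adj h)
        | exact absurd h (by decide)
        | exact absurd h hax | exact absurd h hay | exact absurd h haz
        | exact absurd h hbx | exact absurd h hby | exact absurd h hbz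
        | exact absurd h hxz | exact absurd h hyz
        | exact absurd h hxa | exact absurd h hya | exact absurd h hza
        | exact absurd h hxb | exact absurd h hyb | exact absurd h hzb
        | exact absurd h hzx | exact absurd h hzy
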